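/- Let π = μ_W ∘ (μ_S|S̃(E))⁻¹ : S(E) → W(E). Then (π ⊗ id_{∧E*}) ∘ δ_S = δ_W ∘ (π ⊗ id_{∧E*}) as maps S(E) ⊗ ∧E* → W(E) ⊗ ∧E*, where δ_S and δ_W are the maps induced by the Koszul differential δ of T(E) ⊗ ∧E* on S(E) ⊗ ∧E* and on W(E) ⊗ ∧E* respectively. -/

import Mathlib

/-!
Context: `A` a commutative ring, `lam ∈ A`, `E` a finite free `A`-module with basis
`e`, `ω` an alternating bilinear form, `u x = ω x : E → E*`.  `W(E)`, `S(E)` are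
`RingQuot`s of `T(E)` with projections `μ_W`, `μ_S`; `S̃(E)` is the span of the
nonincreasing tensor monomials `e_I` and `π = μ_W ∘ (μ_S|S̃(E))⁻¹`.  The Koszul
differential `δ` on `T(E) ⊗ ∧E*` (hypothesis `hδ`) induces `δ_S` on `S(E) ⊗ ∧E*` and
`δ_W` on `W(E) ⊗ ∧E*` (hypotheses `hδS`, `hδW`).
-/

open scoped TensorProduct

/-- The defining relation of the Weyl algebra `W(E)`. -/
def weylRel (A : Type*) [CommRing A] {E : Type*} [AddCommGroup E] [Module A E]
    (lam : A) (ω : E →ₗ[A] E →ₗ[A] A) :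
    TensorAlgebra A E → TensorAlgebra A E → Prop := fun a b =>
  ∃ x y : E, a = TensorAlgebra.ι A x * TensorAlgebra.ι A y ∧
    b = TensorAlgebra.ι A y * TensorAlgebra.ι A x +
      algebraMap A (TensorAlgebra A E) (lam * ω x y)

/-- The defining relation of the symmetric algebra `S(E)`. -/
def symRel (A : Type*) [CommRing A] (E : Type*) [AddCommGroup E] [Module A E] :
    TensorAlgebra A E → TensorAlgebra A E → Prop := fun a b =>
  ∃ x y : E, a = TensorAlgebra.ι A x * TensorAlgebra.ι A y ∧
    b = TensorAlgebra.ι A y * TensorAlgebra.ι A x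

/-- `e_I = e_{i₁} ⊗ ⋯ ⊗ e_{i_p} ∈ T(E)` for a list of indices `I` (with `e_∅ = 1`). -/
noncomputable def eTensor {A : Type*} [CommRing A] {E : Type*} [AddCommGroup E]
    [Module A E] {n : ℕ} (e : Module.Basis (Fin n) A E) (I : List (Fin n)) : TensorAlgebra A E :=
  (I.map fun i => TensorAlgebra.ι A (e i)).prod

/-- `S̃(E)`: the `A`-submodule of `T(E)` spanned by the tensors `e_I` over all
nonincreasing sequences `I`. -/
noncomputable def stilde {A : Type*} [CommRing A] {E : Type*} [AddCommGroup E]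
    [Module A E] {n : ℕ} (e : Module.Basis (Fin n) A E) : Submodule A (TensorAlgebra A E) :=
  Submodule.span A {t | ∃ I : List (Fin n), List.Pairwise (· ≥ ·) I ∧ t = eTensor e I}

private theorem eraseIdx_map' {α β : Type*} (f : α → β) (l : List α) (i : ℕ) :
    (l.map f).eraseIdx i = (l.eraseIdx i).map f := by
  induction l generalizing i with
  | nil => simp
  | cons a l ih => cases i <;> simp [List.eraseIdx, ih]

set_option maxHeartbeats 1000000 in
set_option synthInstance.maxHeartbeats 400000 in
/-- `(π ⊗ id) ∘ δ_S = δ_W ∘ (π ⊗ id)` as maps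
`S(E) ⊗ ∧E* → W(E) ⊗ ∧E*`, where `π = μ_W ∘ (μ_S|S̃(E))⁻¹`. -/
theorem stmt8 (A : Type*) [CommRing A] (E : Type*) [AddCommGroup E] [Module A E]
    (lam : A) (ω : E →ₗ[A] E →ₗ[A] A) (halt : ∀ x : E, ω x x = 0)
    (ν ν' : ℕ) (e : Module.Basis (Fin (ν + ν')) A E)
    (δ : TensorAlgebra A E ⊗[A] ExteriorAlgebra A (Module.Dual A E) →ₗ[A]
      TensorAlgebra A E ⊗[A] ExteriorAlgebra A (Module.Dual A E))
    (hδ : ∀ (xs : List E) (η : ExteriorAlgebra A (Module.Dual A E)),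
      δ ((xs.map fun x => TensorAlgebra.ι A x).prod ⊗ₜ[A] η) =
        ∑ i : Fin xs.length,
          ((xs.eraseIdx (i : ℕ)).map fun x => TensorAlgebra.ι A x).prod ⊗ₜ[A]
            (ExteriorAlgebra.ι A (ω (xs.get i)) * η))
    (δS : RingQuot (symRel A E) ⊗[A] ExteriorAlgebra A (Module.Dual A E) →ₗ[A]
      RingQuot (symRel A E) ⊗[A] ExteriorAlgebra A (Module.Dual A E))
    (hδS : δS.comp (TensorProduct.map (RingQuot.mkAlgHom A (symRel A E)).toLinearMap
        LinearMap.id) =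
      (TensorProduct.map (RingQuot.mkAlgHom A (symRel A E)).toLinearMap
        LinearMap.id).comp δ)
    (δW : RingQuot (weylRel A lam ω) ⊗[A] ExteriorAlgebra A (Module.Dual A E) →ₗ[A]
      RingQuot (weylRel A lam ω) ⊗[A] ExteriorAlgebra A (Module.Dual A E))
    (hδW : δW.comp (TensorProduct.map (RingQuot.mkAlgHom A (weylRel A lam ω)).toLinearMap
        LinearMap.id) =
      (TensorProduct.map (RingQuot.mkAlgHom A (weylRel A lam ω)).toLinearMap
        LinearMap.id).comp δ)
    (hS : Function.Bijective
      ((RingQuot.mkAlgHom A (symRel A E)).toLinearMap.comp (stilde e).subtype)) :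
    (TensorProduct.map
        (((RingQuot.mkAlgHom A (weylRel A lam ω)).toLinearMap.comp
            (stilde e).subtype).comp
          (LinearEquiv.ofBijective
            ((RingQuot.mkAlgHom A (symRel A E)).toLinearMap.comp (stilde e).subtype)
            hS).symm.toLinearMap)
        (LinearMap.id : ExteriorAlgebra A (Module.Dual A E) →ₗ[A]
          ExteriorAlgebra A (Module.Dual A E))).comp δS =
      δW.comp
        (TensorProduct.map
          (((RingQuot.mkAlgHom A (weylRel A lam ω)).toLinearMap.comp
              (stilde e).subtype).comp
            (LinearEquiv.ofBijective
              ((RingQuot.mkAlgHom A (symRel A E)).toLinearMap.comp (stilde e).subtype)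
              hS).symm.toLinearMap)
          LinearMap.id) := by
  classical
  set μS := (RingQuot.mkAlgHom A (symRel A E)).toLinearMap with hμS
  set μW := (RingQuot.mkAlgHom A (weylRel A lam ω)).toLinearMap with hμW
  set f := μS.comp (stilde e).subtype with hf
  set π := (μW.comp (stilde e).subtype).comp
      (LinearEquiv.ofBijective f hS).symm.toLinearMap with hπ
  -- key: π ∘ μS = μW on stilde
  have key : ∀ t : TensorAlgebra A E, t ∈ stilde e → π (μS t) = μW t := by
    intro t ht
    have h1 : μS t = f ⟨t, ht⟩ := rfl
    have h0 : f ⟨t, ht⟩ = LinearEquiv.ofBijective f hS ⟨t, ht⟩ := rfl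
    have h2 : (LinearEquiv.ofBijective f hS).symm (f ⟨t, ht⟩) = ⟨t, ht⟩ := by
      rw [h0, LinearEquiv.symm_apply_apply]
    rw [h1, hπ]
    simp only [LinearMap.comp_apply, LinearEquiv.coe_coe, h2]
    rfl
  have heT : ∀ J : List (Fin (ν + ν')),
      eTensor e J = ((J.map e).map fun x => TensorAlgebra.ι A x).prod := by
    intro J; rw [eTensor, List.map_map]; rfl
  have main : ∀ t ∈ stilde e, ∀ η : ExteriorAlgebra A (Module.Dual A E),
      (TensorProduct.map π LinearMap.id) (δS (μS t ⊗ₜ[A] η)) =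
        δW ((TensorProduct.map π LinearMap.id) (μS t ⊗ₜ[A] η)) := by
    intro t ht
    induction ht using Submodule.span_induction with
    | mem t ht =>
      obtain ⟨I, hI, rfl⟩ := ht
      intro η
      -- compute δ on the monomial
      have hterm : δ (eTensor e I ⊗ₜ[A] η) =
          ∑ i : Fin (I.map e).length,
            (eTensor e (I.eraseIdx (i : ℕ))) ⊗ₜ[A]
              (ExteriorAlgebra.ι A (ω ((I.map e).get i)) * η) := by
        rw [heT I, hδ (I.map e) η]
        refine Finset.sum_congr rfl fun i _ => ?_
        rw [eraseIdx_map', ← heT]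
      have hmem : ∀ i : ℕ, eTensor e (I.eraseIdx i) ∈ stilde e := fun i =>
        Submodule.subset_span
          ⟨I.eraseIdx i, List.Pairwise.sublist (List.eraseIdx_sublist I i) hI, rfl⟩
      have e1 : δS (μS (eTensor e I) ⊗ₜ[A] η) =
          (TensorProduct.map μS LinearMap.id) (δ (eTensor e I ⊗ₜ[A] η)) := by
        have := LinearMap.congr_fun hδS (eTensor e I ⊗ₜ[A] η)
        simpa using this
      have e2 : δW (μW (eTensor e I) ⊗ₜ[A] η) =
          (TensorProduct.map μW LinearMap.id) (δ (eTensor e I ⊗ₜ[A] η)) := by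
        have := LinearMap.congr_fun hδW (eTensor e I ⊗ₜ[A] η)
        simpa using this
      have e3 : (TensorProduct.map π LinearMap.id) (μS (eTensor e I) ⊗ₜ[A] η) =
          μW (eTensor e I) ⊗ₜ[A] η := by
        simp [key _ (Submodule.subset_span ⟨I, hI, rfl⟩)]
      rw [e1, e3, e2, hterm, map_sum, map_sum, map_sum]
      refine Finset.sum_congr rfl fun i _ => ?_
      simp [key _ (hmem i)]
    | zero => intro η; simp
    | add x y hx hy ihx ihy =>
      intro η
      simp only [map_add, TensorProduct.add_tmul, ihx η, ihy η]
    | smul a x hx ihx =>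
      intro η
      rw [map_smul, ← TensorProduct.smul_tmul', map_smul, map_smul, ihx η, ← map_smul δW,
        ← map_smul (TensorProduct.map π LinearMap.id), TensorProduct.smul_tmul']
  apply TensorProduct.ext'
  intro s η
  obtain ⟨x, hx⟩ := hS.2 s
  have hs : s = μS x.1 := hx.symm
  simp only [LinearMap.comp_apply, hs]
  exact main x.1 x.2 η
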